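/- For every (d,n)-correlated diagram D, the ℚ[S_{dn}]-submodule 𝒞(D) of W(d) spanned by the classes of all pairs of fillings of shape D is isomorphic, as a module over the group algebra ℚ[S_{dn}], to the row tabloid module ℛ(δ(D)). -/

import Mathlib

noncomputable section

/-- A filling: a `d × n` tableau filled bijectively with the labels `1, …, dn`
(first index = row). -/
abbrev Filling (n d : ℕ) := (Fin d × Fin n) ≃ Fin (d * n)

/-- The free `ℚ`-vector space `𝒫` on the set of pairs of fillings. -/
abbrev PSpace (n d : ℕ) := (Filling n d × Filling n d) →₀ ℚ

/-- The antisymmetry elements of `𝒫`. -/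
def AntisymSet (n d : ℕ) : Set (PSpace n d) :=
  {x | ∃ (S T : Filling n d) (i : Fin d) (c₁ c₂ : Fin n), c₁ ≠ c₂ ∧
    (x = Finsupp.single (S, T) 1 +
          Finsupp.single ((Equiv.swap (i, c₁) (i, c₂)).trans S, T) 1 ∨
     x = Finsupp.single (S, T) 1 +
          Finsupp.single (S, (Equiv.swap (i, c₁) (i, c₂)).trans T) 1)}

/-- `W(d)`: the quotient of `𝒫` by the span of the antisymmetry elements. -/
abbrev Wspace (n d : ℕ) := PSpace n d ⧸ Submodule.span ℚ (AntisymSet n d)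

/-- A `(d,n)`-correlated diagram: a `d × d` array of naturals whose row sums and
column sums all equal `n`. -/
def CorrDiagram (n d : ℕ) :=
  {D : Fin d × Fin d → ℕ //
    (∀ i : Fin d, ∑ j : Fin d, D (i, j) = n) ∧ (∀ j : Fin d, ∑ i : Fin d, D (i, j) = n)}

open Classical in
/-- The shape of a pair of fillings `(S,T)`:
`D_{S,T}(i,j) = #{k : k occurs in row i of S and in row j of T}`. -/
def shapeOf (n d : ℕ) (ST : Filling n d × Filling n d) : Fin d × Fin d → ℕ :=
  fun ij => (Finset.univ.filter (fun k : Fin (d * n) =>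
    (ST.1.symm k).1 = ij.1 ∧ (ST.2.symm k).1 = ij.2)).card

/-- `δ(D)`: the entries of the diagram `D`, listed in non-increasing order. -/
def delta (n d : ℕ) (D : Fin d × Fin d → ℕ) : List ℕ :=
  (Multiset.sort (Multiset.map D Finset.univ.val) (· ≤ ·)).reverse

/-- A row tabloid of shape `l` on the ground set `Fin N`: a tuple of pairwise disjoint
subsets covering `Fin N`, the `t`-th having `l.get t` elements. -/
structure RowTabloid (N : ℕ) (l : List ℕ) where
  parts : Fin l.length → Finset (Fin N)
  disjoint : ∀ t t' : Fin l.length, t ≠ t' → Disjoint (parts t) (parts t')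
  cover : ∀ x : Fin N, ∃ t, x ∈ parts t
  cards : ∀ t, (parts t).card = l.get t

/-- The row tabloid module `ℛ(l)`: the free `ℚ`-vector space on row tabloids of shape `l`. -/
abbrev RowTabloidModule (N : ℕ) (l : List ℕ) := RowTabloid N l →₀ ℚ

/-- The action of a permutation of the ground set on row tabloids:
`σ·(P₁,…,P_ℓ) = (σ(P₁),…,σ(P_ℓ))`. -/
def permTabloid (N : ℕ) (l : List ℕ) (σ : Equiv.Perm (Fin N)) (P : RowTabloid N l) :
    RowTabloid N l where
  parts := fun t => (P.parts t).map σ.toEmbedding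
  disjoint := fun t t' h => (Finset.disjoint_map _).mpr (P.disjoint t t' h)
  cover := fun x => by
    obtain ⟨t, ht⟩ := P.cover (σ.symm x)
    exact ⟨t, Finset.mem_map.mpr ⟨σ.symm x, ht, by simp⟩⟩
  cards := fun t => by simp [Finset.card_map, P.cards]

/-- `𝒞(D)`: the submodule of `W(d)` spanned by the classes of all pairs of fillings of
shape `D`. -/
def Cmod (n d : ℕ) (D : CorrDiagram n d) : Submodule ℚ (Wspace n d) :=
  Submodule.span ℚ
    {w | ∃ ST : Filling n d × Filling n d, shapeOf n d ST = D.1 ∧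
      w = (Submodule.Quotient.mk (Finsupp.single ST (1 : ℚ)) : Wspace n d)}

section AuxiliaryLemmas
lemma exists_get_equiv {α : Type*} {l₁ l₂ : List α} (h : l₁.Perm l₂) :
    ∃ e : Fin l₁.length ≃ Fin l₂.length, ∀ i, l₁.get i = l₂.get (e i) := by
  induction h with
  | nil => exact ⟨Equiv.refl _, fun i => i.elim0⟩
  | cons a h ih =>
      obtain ⟨e, he⟩ := ih
      refine ⟨(finSuccEquiv _).trans (e.optionCongr.trans (finSuccEquiv _).symm), ?_⟩
      intro i
      refine Fin.cases ?_ (fun j => ?_) i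
      · simp
      · simpa using he j
  | swap a b l =>
      refine ⟨(finCongr (by simp : (b::a::l).length = l.length + 2)).trans
        ((Equiv.swap (0 : Fin (l.length + 2)) (1 : Fin (l.length + 2))).trans
          (finCongr (by simp))), ?_⟩
      rintro ⟨m, hm⟩
      simp only [Equiv.trans_apply, finCongr_apply, List.get_eq_getElem]
      rcases m with _ | _ | m
      · simp [Equiv.swap_apply_def, Fin.ext_iff]
      · simp [Equiv.swap_apply_def, Fin.ext_iff]
      · simp [Equiv.swap_apply_def, Fin.ext_iff]
  | trans h₁ h₂ ih₁ ih₂ =>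
      obtain ⟨e₁, he₁⟩ := ih₁
      obtain ⟨e₂, he₂⟩ := ih₂
      exact ⟨e₁.trans e₂, fun i => (he₁ i).trans (he₂ (e₁ i))⟩

variable {n d : ℕ}
/-- The set of labels in row `i` of `S`. -/
def rowFin (S : Filling n d) (i : Fin d) : Finset (Fin (d * n)) :=
  Finset.univ.filter (fun k => (S.symm k).1 = i)

lemma mem_rowFin {S : Filling n d} {i : Fin d} {k : Fin (d * n)} :
    k ∈ rowFin S i ↔ (S.symm k).1 = i := by simp [rowFin]

lemma rowFin_eq_image (S : Filling n d) (i : Fin d) :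
    rowFin S i = Finset.image (fun c => S (i, c)) Finset.univ := by
  ext k
  simp only [mem_rowFin, Finset.mem_image, Finset.mem_univ, true_and]
  constructor
  · intro h
    refine ⟨(S.symm k).2, ?_⟩
    have hx : ((i : Fin d), (S.symm k).2) = S.symm k := by rw [← h]
    rw [hx, S.apply_symm_apply]
  · rintro ⟨c, rfl⟩
    simp

lemma card_rowFin (S : Filling n d) (i : Fin d) : (rowFin S i).card = n := by
  rw [rowFin_eq_image]
  rw [Finset.card_image_of_injective _ (fun a b hab => by
    have := S.injective hab; exact (Prod.mk.injEq _ _ _ _).mp this |>.2)]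
  simp

lemma disjoint_rowFin (S : Filling n d) {i i' : Fin d} (h : i ≠ i') :
    Disjoint (rowFin S i) (rowFin S i') := by
  rw [Finset.disjoint_left]
  intro k hk hk'
  rw [mem_rowFin] at hk hk'
  exact h (hk ▸ hk')

lemma cover_rowFin (S : Filling n d) (k : Fin (d * n)) : k ∈ rowFin S ((S.symm k).1) :=
  mem_rowFin.mpr rfl

lemma rowFin_trans (S : Filling n d) (σ : Equiv.Perm (Fin (d * n))) (i : Fin d) :
    rowFin (S.trans σ) i = (rowFin S i).map σ.toEmbedding := by
  ext k
  simp only [mem_rowFin, Finset.mem_map, Equiv.coe_toEmbedding]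
  constructor
  · intro h
    exact ⟨σ.symm k, by simpa using h, by simp⟩
  · rintro ⟨k', hk', rfl⟩
    simpa using hk'

lemma fst_swap_row (i0 : Fin d) (c₁ c₂ : Fin n) (x : Fin d × Fin n) :
    ((Equiv.swap (i0, c₁) (i0, c₂)) x).1 = x.1 := by
  rw [Equiv.swap_apply_def]
  split_ifs with h1 h2 <;> simp_all [Prod.ext_iff]

lemma rowFin_swap_left (S : Filling n d) (i0 : Fin d) (c₁ c₂ : Fin n) (i : Fin d) :
    rowFin ((Equiv.swap (i0, c₁) (i0, c₂)).trans S) i = rowFin S i := by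
  ext k
  simp only [mem_rowFin, Equiv.symm_trans_apply, Equiv.symm_swap]
  rw [fst_swap_row]

/-- The canonical (row-sorted) filling with prescribed row sets. -/
def canonP (P : Fin d → Finset (Fin (d * n))) (hc : ∀ i, (P i).card = n)
    (hdisj : ∀ i i', i ≠ i' → Disjoint (P i) (P i')) : Filling n d :=
  Equiv.ofBijective (fun x => (P x.1).orderEmbOfFin (hc x.1) x.2) (by
    rw [Fintype.bijective_iff_injective_and_card]
    refine ⟨?_, by simp⟩
    intro x y hxy
    by_cases h : x.1 = y.1
    · obtain ⟨x1, x2⟩ := x; obtain ⟨y1, y2⟩ := y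
      dsimp at h; subst h
      simp only [Prod.mk.injEq, true_and]
      simpa using ((P x1).orderEmbOfFin (hc x1)).injective hxy
    · exfalso
      have h1 := (P x.1).orderEmbOfFin_mem (hc x.1) x.2
      have h2 := (P y.1).orderEmbOfFin_mem (hc y.1) y.2
      simp only at hxy
      rw [hxy] at h1
      exact Finset.disjoint_left.mp (hdisj _ _ h) h1 h2)

lemma canonP_mem (P : Fin d → Finset (Fin (d * n))) (hc) (hdisj) (x : Fin d × Fin n) :
    canonP P hc hdisj x ∈ P x.1 := (P x.1).orderEmbOfFin_mem (hc x.1) x.2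

lemma rowFin_canonP (P : Fin d → Finset (Fin (d * n))) (hc) (hdisj) :
    rowFin (canonP P hc hdisj) = P := by
  funext i
  refine Finset.eq_of_subset_of_card_le ?_ ?_
  · rw [rowFin_eq_image]
    intro k hk
    obtain ⟨c, _, rfl⟩ := Finset.mem_image.mp hk
    exact canonP_mem P hc hdisj (i, c)
  · rw [card_rowFin, hc]



/-- Sign of a permutation of positions, as a rational number. -/
def sgnq (π : Equiv.Perm (Fin d × Fin n)) : ℚ := ((Equiv.Perm.sign π : ℤ) : ℚ)

lemma sgnq_mul (π ρ : Equiv.Perm (Fin d × Fin n)) : sgnq (π * ρ) = sgnq π * sgnq ρ := by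
  unfold sgnq
  rw [map_mul]
  push_cast
  ring

lemma sgnq_mul_self (π : Equiv.Perm (Fin d × Fin n)) : sgnq π * sgnq π = 1 := by
  unfold sgnq
  rcases Int.units_eq_one_or (Equiv.Perm.sign π) with h | h <;> rw [h] <;> norm_num

lemma sgnq_one : sgnq (1 : Equiv.Perm (Fin d × Fin n)) = 1 := by simp [sgnq]

lemma sgnq_swap {x y : Fin d × Fin n} (h : x ≠ y) : sgnq (Equiv.swap x y) = -1 := by
  simp [sgnq, Equiv.Perm.sign_swap h]

lemma sgnq_inv (π : Equiv.Perm (Fin d × Fin n)) : sgnq π⁻¹ = sgnq π := by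
  simp [sgnq]

def mkW : PSpace n d →ₗ[ℚ] Wspace n d := (Submodule.span ℚ (AntisymSet n d)).mkQ

lemma mkW_apply (x : PSpace n d) : mkW x = Submodule.Quotient.mk x := rfl

lemma relS (S T : Filling n d) (i : Fin d) {c₁ c₂ : Fin n} (h : c₁ ≠ c₂) :
    mkW (Finsupp.single (((Equiv.swap (i, c₁) (i, c₂)).trans S : Filling n d), T) 1)
      = - mkW (Finsupp.single (S, T) 1) := by
  have hmem : (Finsupp.single ((S : Filling n d), T) 1 +
      Finsupp.single (((Equiv.swap (i, c₁) (i, c₂)).trans S : Filling n d), T) 1 : PSpace n d)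
      ∈ Submodule.span ℚ (AntisymSet n d) :=
    Submodule.subset_span ⟨S, T, i, c₁, c₂, h, Or.inl rfl⟩
  have h0 : mkW (Finsupp.single ((S : Filling n d), T) 1 +
      Finsupp.single (((Equiv.swap (i, c₁) (i, c₂)).trans S : Filling n d), T) 1) = 0 := by
    rw [mkW_apply, Submodule.Quotient.mk_eq_zero]
    exact hmem
  rw [map_add] at h0
  exact eq_neg_of_add_eq_zero_left (by rw [add_comm] at h0; exact h0)

lemma relT (S T : Filling n d) (i : Fin d) {c₁ c₂ : Fin n} (h : c₁ ≠ c₂) :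
    mkW (Finsupp.single (S, ((Equiv.swap (i, c₁) (i, c₂)).trans T : Filling n d)) 1)
      = - mkW (Finsupp.single (S, T) 1) := by
  have hmem : (Finsupp.single ((S : Filling n d), T) 1 +
      Finsupp.single (S, ((Equiv.swap (i, c₁) (i, c₂)).trans T : Filling n d)) 1 : PSpace n d)
      ∈ Submodule.span ℚ (AntisymSet n d) :=
    Submodule.subset_span ⟨S, T, i, c₁, c₂, h, Or.inr rfl⟩
  have h0 : mkW (Finsupp.single ((S : Filling n d), T) 1 +
      Finsupp.single (S, ((Equiv.swap (i, c₁) (i, c₂)).trans T : Filling n d)) 1) = 0 := by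
    rw [mkW_apply, Submodule.Quotient.mk_eq_zero]
    exact hmem
  rw [map_add] at h0
  exact eq_neg_of_add_eq_zero_left (by rw [add_comm] at h0; exact h0)
lemma reduceS (π : Equiv.Perm (Fin d × Fin n)) (hπ : ∀ x, (π x).1 = x.1)
    (S T : Filling n d) :
    mkW (Finsupp.single ((π.trans S : Filling n d), T) 1)
      = sgnq π • mkW (Finsupp.single (S, T) 1) := by
  generalize hc : π.support.card = c
  induction c using Nat.strong_induction_on generalizing π S with
  | _ c ih =>
    by_cases h1 : π = 1
    · subst h1
      rw [show ((1 : Equiv.Perm (Fin d × Fin n)).trans S) = S from Equiv.ext fun x => rfl,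
        sgnq_one, one_smul]
    · have hx : ∃ x, π x ≠ x := by
        by_contra hall
        push_neg at hall
        exact h1 (Equiv.ext hall)
      obtain ⟨x, hxne⟩ := hx
      have hfst : (π x).1 = x.1 := hπ x
      have hsnd : (π x).2 ≠ x.2 := by
        intro hs
        exact hxne (Prod.ext hfst hs)
      set τ := Equiv.swap x (π x) with hτ
      set π' := τ * π with hπ'
      have hcard : π'.support.card < c := by
        rw [← hc, hπ', hτ]
        exact Equiv.Perm.card_support_swap_mul hxne
      have hπ'row : ∀ y, (π' y).1 = y.1 := by
        intro y
        have : ((Equiv.swap x (π x)) (π y)).1 = (π y).1 := by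
          have hx' : x = (x.1, x.2) := rfl
          have hpx : π x = (x.1, (π x).2) := Prod.ext hfst rfl
          rw [hx', hpx]
          exact fst_swap_row x.1 x.2 (π x).2 (π y)
        rw [hπ']
        simpa [Equiv.Perm.mul_apply] using this.trans (hπ y)
      have hdecomp : π = τ * π' := by
        rw [hπ', hτ, ← mul_assoc, Equiv.swap_mul_self, one_mul]
      have htrans : π.trans S = π'.trans (τ.trans S) := by
        rw [hdecomp]
        rfl
      rw [htrans]
      rw [ih π'.support.card hcard π' hπ'row (τ.trans S) rfl]
      have hswapform : τ = Equiv.swap (x.1, x.2) (x.1, (π x).2) := by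
        rw [hτ]
        congr 1
        exact Prod.ext hfst rfl
      have hrel : mkW (Finsupp.single ((τ.trans S : Filling n d), T) 1)
          = - mkW (Finsupp.single (S, T) 1) := by
        rw [hswapform]
        exact relS S T x.1 (fun hcc => hsnd hcc.symm)
      rw [hrel]
      have hsgn : sgnq π = - sgnq π' := by
        rw [hdecomp, sgnq_mul, hτ, sgnq_swap (Ne.symm hxne)]
        ring
      rw [hsgn, smul_neg, neg_smul]
lemma reduceT (π : Equiv.Perm (Fin d × Fin n)) (hπ : ∀ x, (π x).1 = x.1)
    (S T : Filling n d) :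
    mkW (Finsupp.single (S, (π.trans T : Filling n d)) 1)
      = sgnq π • mkW (Finsupp.single (S, T) 1) := by
  generalize hc : π.support.card = c
  induction c using Nat.strong_induction_on generalizing π T with
  | _ c ih =>
    by_cases h1 : π = 1
    · subst h1
      rw [show ((1 : Equiv.Perm (Fin d × Fin n)).trans T) = T from Equiv.ext fun x => rfl,
        sgnq_one, one_smul]
    · have hx : ∃ x, π x ≠ x := by
        by_contra hall
        push_neg at hall
        exact h1 (Equiv.ext hall)
      obtain ⟨x, hxne⟩ := hx
      have hfst : (π x).1 = x.1 := hπ x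
      have hsnd : (π x).2 ≠ x.2 := by
        intro hs
        exact hxne (Prod.ext hfst hs)
      set τ := Equiv.swap x (π x) with hτ
      set π' := τ * π with hπ'
      have hcard : π'.support.card < c := by
        rw [← hc, hπ', hτ]
        exact Equiv.Perm.card_support_swap_mul hxne
      have hπ'row : ∀ y, (π' y).1 = y.1 := by
        intro y
        have : ((Equiv.swap x (π x)) (π y)).1 = (π y).1 := by
          have hx' : x = (x.1, x.2) := rfl
          have hpx : π x = (x.1, (π x).2) := Prod.ext hfst rfl
          rw [hx', hpx]
          exact fst_swap_row x.1 x.2 (π x).2 (π y)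
        rw [hπ']
        simpa [Equiv.Perm.mul_apply] using this.trans (hπ y)
      have hdecomp : π = τ * π' := by
        rw [hπ', hτ, ← mul_assoc, Equiv.swap_mul_self, one_mul]
      have htrans : π.trans T = π'.trans (τ.trans T) := by
        rw [hdecomp]
        rfl
      rw [htrans]
      rw [ih π'.support.card hcard π' hπ'row (τ.trans T) rfl]
      have hswapform : τ = Equiv.swap (x.1, x.2) (x.1, (π x).2) := by
        rw [hτ]
        congr 1
        exact Prod.ext hfst rfl
      have hrel : mkW (Finsupp.single (S, (τ.trans T : Filling n d)) 1)
          = - mkW (Finsupp.single (S, T) 1) := by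
        rw [hswapform]
        exact relT S T x.1 (fun hcc => hsnd hcc.symm)
      rw [hrel]
      have hsgn : sgnq π = - sgnq π' := by
        rw [hdecomp, sgnq_mul, hτ, sgnq_swap (Ne.symm hxne)]
        ring
      rw [hsgn, smul_neg, neg_smul]

/-- The canonical filling attached to the row sets of `S`. -/
def canonRow (S : Filling n d) : Filling n d :=
  canonP (rowFin S) (card_rowFin S) (fun _ _ h => disjoint_rowFin S h)

lemma rowFin_canonRow (S : Filling n d) : rowFin (canonRow S) = rowFin S :=
  rowFin_canonP _ _ _

/-- The row-preserving permutation comparing `S` to its canonical form. -/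
def cmpPerm (S : Filling n d) : Equiv.Perm (Fin d × Fin n) := S.trans (canonRow S).symm

lemma cmpPerm_row (S : Filling n d) (x : Fin d × Fin n) : ((cmpPerm S) x).1 = x.1 := by
  have h1 : S x ∈ rowFin S x.1 := by
    rw [rowFin_eq_image]
    exact Finset.mem_image.mpr ⟨x.2, Finset.mem_univ _, rfl⟩
  have h2 : S x ∈ rowFin (canonRow S) x.1 := by rw [rowFin_canonRow]; exact h1
  exact mem_rowFin.mp h2

lemma cmpPerm_decomp (S : Filling n d) : (cmpPerm S).trans (canonRow S) = S :=
  Equiv.ext fun x => by simp [cmpPerm]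

/-- Key reduction: every basis class equals a signed multiple of its canonical class. -/
lemma reduce_pair (S T : Filling n d) :
    mkW (Finsupp.single (S, T) 1)
      = (sgnq (S.trans T.symm) * sgnq ((canonRow S).trans (canonRow T).symm)) •
          mkW (Finsupp.single ((canonRow S : Filling n d), canonRow T) 1) := by
  have h1 : mkW (Finsupp.single (S, T) 1)
      = sgnq (cmpPerm S) • mkW (Finsupp.single ((canonRow S : Filling n d), T) 1) := by
    conv_lhs => rw [← cmpPerm_decomp S]
    exact reduceS (cmpPerm S) (cmpPerm_row S) (canonRow S) T
  have h2 : mkW (Finsupp.single ((canonRow S : Filling n d), T) 1)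
      = sgnq (cmpPerm T) • mkW (Finsupp.single ((canonRow S : Filling n d), canonRow T) 1) := by
    conv_lhs => rw [← cmpPerm_decomp T]
    exact reduceT (cmpPerm T) (cmpPerm_row T) (canonRow S) (canonRow T)
  rw [h1, h2, smul_smul]
  congr 1
  -- sign identity: sgn(πS) * sgn(πT) = sgn(T⁻¹∘S) * sgn(T₀⁻¹∘S₀)
  have hkappa : S.trans T.symm = (cmpPerm T)⁻¹ * ((canonRow S).trans (canonRow T).symm) *
      (cmpPerm S) := by
    apply Equiv.ext
    intro x
    simp [cmpPerm, Equiv.Perm.mul_apply, Equiv.Perm.inv_def]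
  rw [hkappa, sgnq_mul, sgnq_mul, sgnq_inv]
  rw [show sgnq (cmpPerm T) * sgnq ((canonRow S).trans (canonRow T).symm) * sgnq (cmpPerm S) *
      sgnq ((canonRow S).trans (canonRow T).symm)
      = (sgnq (cmpPerm S) * sgnq (cmpPerm T)) *
        (sgnq ((canonRow S).trans (canonRow T).symm) *
          sgnq ((canonRow S).trans (canonRow T).symm)) from by ring,
    sgnq_mul_self, mul_one]

/-- Pairs of row-set assignments. -/
abbrev PairPart (n d : ℕ) := (Fin d → Finset (Fin (d * n))) × (Fin d → Finset (Fin (d * n)))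

lemma lift_single {X : Type*} {M : Type*} [AddCommGroup M] [Module ℚ M]
    (f : X → M) (x : X) :
    (Finsupp.lift M ℚ X f) (Finsupp.single x 1) = f x := by
  simp

/-- The sign-normalized projection of `𝒫` onto the free module on pairs of row-set data. -/
def phi : PSpace n d →ₗ[ℚ] (PairPart n d →₀ ℚ) :=
  Finsupp.lift _ ℚ _ (fun ST =>
    sgnq (ST.1.trans ST.2.symm) • Finsupp.single (rowFin ST.1, rowFin ST.2) (1 : ℚ))

lemma phi_single (S T : Filling n d) :
    phi (Finsupp.single (S, T) 1)
      = sgnq (S.trans T.symm) • Finsupp.single (rowFin S, rowFin T) (1 : ℚ) :=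
  lift_single _ _

lemma phi_antisym (x : PSpace n d) (hx : x ∈ AntisymSet n d) : phi x = 0 := by
  obtain ⟨S, T, i, c₁, c₂, hne, hor⟩ := hx
  have hswap_ne : ((i, c₁) : Fin d × Fin n) ≠ (i, c₂) := by
    simp [Prod.ext_iff, hne]
  rcases hor with rfl | rfl
  · rw [map_add, phi_single, phi_single]
    have hperm : ((Equiv.swap (i, c₁) (i, c₂)).trans S).trans T.symm
        = (S.trans T.symm) * (Equiv.swap (i, c₁) (i, c₂)) := by
      apply Equiv.ext; intro x; rfl
    rw [hperm, sgnq_mul, sgnq_swap hswap_ne]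
    rw [show rowFin ((Equiv.swap (i, c₁) (i, c₂)).trans S) = rowFin S from
      funext fun j => rowFin_swap_left S i c₁ c₂ j]
    rw [mul_neg_one, neg_smul, add_neg_cancel]
  · rw [map_add, phi_single, phi_single]
    have hperm : S.trans ((Equiv.swap (i, c₁) (i, c₂)).trans T).symm
        = (Equiv.swap (i, c₁) (i, c₂)) * (S.trans T.symm) := by
      apply Equiv.ext; intro x; simp [Equiv.Perm.mul_apply]
    rw [hperm, sgnq_mul, sgnq_swap hswap_ne]
    rw [show rowFin ((Equiv.swap (i, c₁) (i, c₂)).trans T) = rowFin T from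
      funext fun j => rowFin_swap_left T i c₁ c₂ j]
    rw [neg_one_mul, neg_smul, add_neg_cancel]

/-- `phi` descends to the quotient `W(d)`. -/
def phibar : Wspace n d →ₗ[ℚ] (PairPart n d →₀ ℚ) :=
  Submodule.liftQ _ phi (by
    rw [Submodule.span_le]
    intro x hx
    exact LinearMap.mem_ker.mpr (phi_antisym x hx))

lemma phibar_mk (x : PSpace n d) :
    phibar (Submodule.Quotient.mk x : Wspace n d) = phi x := rfl
lemma RowTabloid.ext' {N : ℕ} {l : List ℕ} {P Q : RowTabloid N l}
    (h : P.parts = Q.parts) : P = Q := by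
  cases P; cases Q; cases h; rfl

lemma shape_inter (S T : Filling n d) (i j : Fin d) :
    shapeOf n d (S, T) (i, j) = ((rowFin S i) ∩ (rowFin T j)).card := by
  classical
  unfold shapeOf rowFin
  rw [← Finset.filter_and]

lemma exists_tau (D : CorrDiagram n d) :
    ∃ τ : (Fin d × Fin d) ≃ Fin (delta n d D.1).length,
      ∀ x, (delta n d D.1).get (τ x) = D.1 x := by
  classical
  set lb := (Finset.univ : Finset (Fin d × Fin d)).toList with hlb
  have hnodup : lb.Nodup := Finset.nodup_toList _
  have hmem : ∀ x : Fin d × Fin d, x ∈ lb := fun x => Finset.mem_toList.mpr (Finset.mem_univ x)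
  set ι := (hnodup.getEquivOfForallMemList lb hmem).symm with hι
  have hι_get : ∀ x, lb.get (ι x) = x := by
    intro x
    have := (hnodup.getEquivOfForallMemList lb hmem).apply_symm_apply x
    exact this
  have hperm : (lb.map D.1).Perm (delta n d D.1) := by
    rw [← Multiset.coe_eq_coe]
    show ((lb.map D.1 : List ℕ) : Multiset ℕ) = ((delta n d D.1 : List ℕ) : Multiset ℕ)
    rw [delta]
    rw [Multiset.coe_reverse]
    rw [Multiset.sort_eq]
    show (↑(lb.map D.1) : Multiset ℕ) = _
    rw [← Multiset.map_coe]
    rw [hlb, Finset.coe_toList]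
  obtain ⟨e2, he2⟩ := exists_get_equiv hperm
  refine ⟨ι.trans ((finCongr (by simp)).trans e2), ?_⟩
  intro x
  rw [Equiv.trans_apply, Equiv.trans_apply, ← he2]
  rw [List.get_eq_getElem, List.getElem_map]
  conv_rhs => rw [← hι_get x]
  rfl

section TauSection

variable (D : CorrDiagram n d) (τ : (Fin d × Fin d) ≃ Fin (delta n d D.1).length)
  (hτ : ∀ x, (delta n d D.1).get (τ x) = D.1 x)

/-- A pair of row-set functions of shape `D`. -/
def GoodPair (A B : Fin d → Finset (Fin (d * n))) : Prop :=
  (∀ i i', i ≠ i' → Disjoint (A i) (A i')) ∧ (∀ j j', j ≠ j' → Disjoint (B j) (B j')) ∧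
  (∀ k, ∃ i, k ∈ A i) ∧ (∀ k, ∃ j, k ∈ B j) ∧
  (∀ i j, ((A i) ∩ (B j)).card = D.1 (i, j))

lemma good_of_shape {S T : Filling n d} (h : shapeOf n d (S, T) = D.1) :
    GoodPair D (rowFin S) (rowFin T) := by
  refine ⟨fun i i' hi => disjoint_rowFin S hi, fun j j' hj => disjoint_rowFin T hj,
    fun k => ⟨(S.symm k).1, cover_rowFin S k⟩, fun k => ⟨(T.symm k).1, cover_rowFin T k⟩,
    fun i j => ?_⟩
  rw [← shape_inter, h]

/-- The row tabloid determined by a good pair. -/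
def tabloidOf (A B : Fin d → Finset (Fin (d * n))) (h : GoodPair D A B) :
    RowTabloid (d * n) (delta n d D.1) where
  parts t := A (τ.symm t).1 ∩ B (τ.symm t).2
  disjoint t t' ht := by
    have hne : τ.symm t ≠ τ.symm t' := fun hh => ht (by
      have := congrArg τ hh; simpa using this)
    by_cases hfst : (τ.symm t).1 = (τ.symm t').1
    · have hsnd : (τ.symm t).2 ≠ (τ.symm t').2 := fun hh => hne (Prod.ext hfst hh)
      exact Finset.disjoint_of_subset_left Finset.inter_subset_right
        (Finset.disjoint_of_subset_right Finset.inter_subset_right (h.2.1 _ _ hsnd))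
    · exact Finset.disjoint_of_subset_left Finset.inter_subset_left
        (Finset.disjoint_of_subset_right Finset.inter_subset_left (h.1 _ _ hfst))
  cover k := by
    obtain ⟨i, hi⟩ := h.2.2.1 k
    obtain ⟨j, hj⟩ := h.2.2.2.1 k
    refine ⟨τ (i, j), ?_⟩
    show k ∈ A (τ.symm (τ (i, j))).1 ∩ B (τ.symm (τ (i, j))).2
    rw [Equiv.symm_apply_apply]
    exact Finset.mem_inter.mpr ⟨hi, hj⟩
  cards t := by
    rw [h.2.2.2.2 (τ.symm t).1 (τ.symm t).2]
    have := hτ ((τ.symm t).1, (τ.symm t).2)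
    rw [show (((τ.symm t).1, (τ.symm t).2) : Fin d × Fin d) = τ.symm t from rfl] at this
    rw [← this, Equiv.apply_symm_apply]

/-- Row sets of the first filling reconstructed from a tabloid. -/
def Pset (P : RowTabloid (d * n) (delta n d D.1)) (i : Fin d) : Finset (Fin (d * n)) :=
  Finset.univ.biUnion (fun j : Fin d => P.parts (τ (i, j)))

/-- Row sets of the second filling reconstructed from a tabloid. -/
def Qset (P : RowTabloid (d * n) (delta n d D.1)) (j : Fin d) : Finset (Fin (d * n)) :=
  Finset.univ.biUnion (fun i : Fin d => P.parts (τ (i, j)))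

lemma Pset_card (hτ : ∀ x, (delta n d D.1).get (τ x) = D.1 x) (P : RowTabloid (d * n) (delta n d D.1)) (i : Fin d) :
    (Pset D τ P i).card = n := by
  rw [Pset, Finset.card_biUnion (fun j _ j' _ hj => P.disjoint _ _ (by
    intro hh; exact hj (by simpa [Prod.ext_iff] using τ.injective hh)))]
  calc ∑ j : Fin d, (P.parts (τ (i, j))).card
      = ∑ j : Fin d, D.1 (i, j) := by
        refine Finset.sum_congr rfl fun j _ => ?_
        rw [P.cards, hτ]
    _ = n := D.2.1 i

lemma Qset_card (hτ : ∀ x, (delta n d D.1).get (τ x) = D.1 x) (P : RowTabloid (d * n) (delta n d D.1)) (j : Fin d) :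
    (Qset D τ P j).card = n := by
  rw [Qset, Finset.card_biUnion (fun i _ i' _ hi => P.disjoint _ _ (by
    intro hh; exact hi (by simpa [Prod.ext_iff] using τ.injective hh)))]
  calc ∑ i : Fin d, (P.parts (τ (i, j))).card
      = ∑ i : Fin d, D.1 (i, j) := by
        refine Finset.sum_congr rfl fun i _ => ?_
        rw [P.cards, hτ]
    _ = n := D.2.2 j

lemma Pset_disjoint (P : RowTabloid (d * n) (delta n d D.1)) {i i' : Fin d} (h : i ≠ i') :
    Disjoint (Pset D τ P i) (Pset D τ P i') := by
  simp only [Pset]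
  rw [Finset.disjoint_biUnion_left]
  intro j _
  rw [Finset.disjoint_biUnion_right]
  intro j' _
  exact P.disjoint _ _ (fun hh => h (congrArg Prod.fst (τ.injective hh)))

lemma Qset_disjoint (P : RowTabloid (d * n) (delta n d D.1)) {j j' : Fin d} (h : j ≠ j') :
    Disjoint (Qset D τ P j) (Qset D τ P j') := by
  simp only [Qset]
  rw [Finset.disjoint_biUnion_left]
  intro i _
  rw [Finset.disjoint_biUnion_right]
  intro i' _
  exact P.disjoint _ _ (fun hh => h (congrArg Prod.snd (τ.injective hh)))

lemma Pset_inter_Qset (P : RowTabloid (d * n) (delta n d D.1)) (i j : Fin d) :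
    Pset D τ P i ∩ Qset D τ P j = P.parts (τ (i, j)) := by
  ext k
  simp only [Finset.mem_inter, Pset, Qset, Finset.mem_biUnion, Finset.mem_univ, true_and]
  constructor
  · rintro ⟨⟨j₁, hj₁⟩, ⟨i₁, hi₁⟩⟩
    have : τ (i, j₁) = τ (i₁, j) := by
      by_contra hne
      exact Finset.disjoint_left.mp (P.disjoint _ _ hne) hj₁ hi₁
    have h2 : j₁ = j := (Prod.ext_iff.mp (τ.injective this)).2
    rw [h2] at hj₁
    exact hj₁
  · intro hk
    exact ⟨⟨j, hk⟩, ⟨i, hk⟩⟩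

lemma good_Pset_Qset (hτ : ∀ x, (delta n d D.1).get (τ x) = D.1 x) (P : RowTabloid (d * n) (delta n d D.1)) :
    GoodPair D (Pset D τ P) (Qset D τ P) := by
  refine ⟨fun i i' h => Pset_disjoint D τ P h, fun j j' h => Qset_disjoint D τ P h,
    ?_, ?_, ?_⟩
  · intro k
    obtain ⟨t, ht⟩ := P.cover k
    refine ⟨(τ.symm t).1, ?_⟩
    rw [Pset, Finset.mem_biUnion]
    refine ⟨(τ.symm t).2, Finset.mem_univ _, ?_⟩
    rw [show (((τ.symm t).1, (τ.symm t).2) : Fin d × Fin d) = τ.symm t from rfl,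
      Equiv.apply_symm_apply]
    exact ht
  · intro k
    obtain ⟨t, ht⟩ := P.cover k
    refine ⟨(τ.symm t).2, ?_⟩
    rw [Qset, Finset.mem_biUnion]
    refine ⟨(τ.symm t).1, Finset.mem_univ _, ?_⟩
    rw [show (((τ.symm t).1, (τ.symm t).2) : Fin d × Fin d) = τ.symm t from rfl,
      Equiv.apply_symm_apply]
    exact ht
  · intro i j
    rw [Pset_inter_Qset, P.cards, hτ]

lemma tabloidOf_Pset_Qset (P : RowTabloid (d * n) (delta n d D.1)) :
    tabloidOf D τ hτ (Pset D τ P) (Qset D τ P) (good_Pset_Qset D τ hτ P) = P := by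
  apply RowTabloid.ext'
  funext t
  show Pset D τ P (τ.symm t).1 ∩ Qset D τ P (τ.symm t).2 = P.parts t
  rw [Pset_inter_Qset]
  rw [show (((τ.symm t).1, (τ.symm t).2) : Fin d × Fin d) = τ.symm t from rfl,
    Equiv.apply_symm_apply]

lemma Pset_tabloidOf (A B : Fin d → Finset (Fin (d * n))) (h : GoodPair D A B) :
    Pset D τ (tabloidOf D τ hτ A B h) = A := by
  funext i
  ext k
  simp only [Pset, Finset.mem_biUnion, Finset.mem_univ, true_and]
  constructor
  · rintro ⟨j, hj⟩
    have : (tabloidOf D τ hτ A B h).parts (τ (i, j)) = A i ∩ B j := by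
      show A (τ.symm (τ (i, j))).1 ∩ B (τ.symm (τ (i, j))).2 = _
      rw [Equiv.symm_apply_apply]
    rw [this] at hj
    exact (Finset.mem_inter.mp hj).1
  · intro hk
    obtain ⟨j, hj⟩ := h.2.2.2.1 k
    refine ⟨j, ?_⟩
    show k ∈ A (τ.symm (τ (i, j))).1 ∩ B (τ.symm (τ (i, j))).2
    rw [Equiv.symm_apply_apply]
    exact Finset.mem_inter.mpr ⟨hk, hj⟩

lemma Qset_tabloidOf (A B : Fin d → Finset (Fin (d * n))) (h : GoodPair D A B) :
    Qset D τ (tabloidOf D τ hτ A B h) = B := by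
  funext j
  ext k
  simp only [Qset, Finset.mem_biUnion, Finset.mem_univ, true_and]
  constructor
  · rintro ⟨i, hi⟩
    have : (tabloidOf D τ hτ A B h).parts (τ (i, j)) = A i ∩ B j := by
      show A (τ.symm (τ (i, j))).1 ∩ B (τ.symm (τ (i, j))).2 = _
      rw [Equiv.symm_apply_apply]
    rw [this] at hi
    exact (Finset.mem_inter.mp hi).2
  · intro hk
    obtain ⟨i, hi⟩ := h.2.2.1 k
    refine ⟨i, ?_⟩
    show k ∈ A (τ.symm (τ (i, j))).1 ∩ B (τ.symm (τ (i, j))).2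
    rw [Equiv.symm_apply_apply]
    exact Finset.mem_inter.mpr ⟨hi, hk⟩

end TauSection

section Maps

open Classical

variable (D : CorrDiagram n d) (τ : (Fin d × Fin d) ≃ Fin (delta n d D.1).length)
  (hτ : ∀ x, (delta n d D.1).get (τ x) = D.1 x)

lemma canonP_congr {P P' : Fin d → Finset (Fin (d * n))} (h : P = P')
    (hc) (hdisj) (hc') (hdisj') : canonP P hc hdisj = canonP P' hc' hdisj' := by
  subst h; rfl

lemma tabloidOf_congr {A A' B B' : Fin d → Finset (Fin (d * n))} (hA : A = A') (hB : B = B')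
    (h : GoodPair D A B) (h' : GoodPair D A' B') :
    tabloidOf D τ hτ A B h = tabloidOf D τ hτ A' B' h' := by
  subst hA; subst hB; rfl

/-- Canonical first filling of a tabloid. -/
def S0 (P : RowTabloid (d * n) (delta n d D.1)) : Filling n d :=
  canonP (Pset D τ P) (Pset_card D τ hτ P) (fun _ _ h => Pset_disjoint D τ P h)

/-- Canonical second filling of a tabloid. -/
def T0 (P : RowTabloid (d * n) (delta n d D.1)) : Filling n d :=
  canonP (Qset D τ P) (Qset_card D τ hτ P) (fun _ _ h => Qset_disjoint D τ P h)

lemma rowFin_S0 (P : RowTabloid (d * n) (delta n d D.1)) :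
    rowFin (S0 D τ hτ P) = Pset D τ P := rowFin_canonP _ _ _

lemma rowFin_T0 (P : RowTabloid (d * n) (delta n d D.1)) :
    rowFin (T0 D τ hτ P) = Qset D τ P := rowFin_canonP _ _ _

lemma shape_S0T0 (P : RowTabloid (d * n) (delta n d D.1)) :
    shapeOf n d (S0 D τ hτ P, T0 D τ hτ P) = D.1 := by
  funext ij
  obtain ⟨i, j⟩ := ij
  rw [shape_inter, rowFin_S0, rowFin_T0, Pset_inter_Qset, P.cards, hτ]

/-- The image in `W(d)` of the canonical pair of a tabloid, with its canonical sign. -/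
def Gfun (P : RowTabloid (d * n) (delta n d D.1)) : Wspace n d :=
  sgnq ((S0 D τ hτ P).trans (T0 D τ hτ P).symm) •
    mkW (Finsupp.single ((S0 D τ hτ P : Filling n d), T0 D τ hτ P) 1)

lemma Gfun_mem (P : RowTabloid (d * n) (delta n d D.1)) : Gfun D τ hτ P ∈ Cmod n d D := by
  refine Submodule.smul_mem _ _ (Submodule.subset_span ?_)
  exact ⟨(S0 D τ hτ P, T0 D τ hτ P), shape_S0T0 D τ hτ P, rfl⟩

def G0 : RowTabloidModule (d * n) (delta n d D.1) →ₗ[ℚ] Wspace n d :=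
  Finsupp.lift _ ℚ _ (Gfun D τ hτ)

def G1 : RowTabloidModule (d * n) (delta n d D.1) →ₗ[ℚ] Cmod n d D :=
  Finsupp.lift _ ℚ _ (fun P => (⟨Gfun D τ hτ P, Gfun_mem D τ hτ P⟩ : Cmod n d D))

def Fp : (PairPart n d →₀ ℚ) →ₗ[ℚ] RowTabloidModule (d * n) (delta n d D.1) :=
  Finsupp.lift _ ℚ _ (fun AB =>
    if h : GoodPair D AB.1 AB.2 then Finsupp.single (tabloidOf D τ hτ AB.1 AB.2 h) 1 else 0)

def F0 : Wspace n d →ₗ[ℚ] RowTabloidModule (d * n) (delta n d D.1) :=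
  (Fp D τ hτ).comp phibar

lemma F0_mk_single (S T : Filling n d) (h : shapeOf n d (S, T) = D.1) :
    F0 D τ hτ (Submodule.Quotient.mk (Finsupp.single ((S : Filling n d), T) 1) : Wspace n d)
      = sgnq (S.trans T.symm) •
          Finsupp.single (tabloidOf D τ hτ (rowFin S) (rowFin T) (good_of_shape D h)) 1 := by
  have h1 : F0 D τ hτ (Submodule.Quotient.mk (Finsupp.single ((S : Filling n d), T) 1))
      = Fp D τ hτ (phi (Finsupp.single ((S : Filling n d), T) 1)) := rfl
  rw [h1, phi_single, map_smul]
  congr 1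
  rw [show (Fp D τ hτ) (Finsupp.single ((rowFin S, rowFin T) : PairPart n d) 1)
    = if hg : GoodPair D (rowFin S) (rowFin T) then
        Finsupp.single (tabloidOf D τ hτ (rowFin S) (rowFin T) hg) 1 else 0 from
    lift_single _ _]
  rw [dif_pos (good_of_shape D h)]

lemma F0_Gfun (P : RowTabloid (d * n) (delta n d D.1)) :
    F0 D τ hτ (Gfun D τ hτ P) = Finsupp.single P 1 := by
  rw [Gfun, map_smul, mkW_apply, F0_mk_single D τ hτ _ _ (shape_S0T0 D τ hτ P)]
  rw [tabloidOf_congr D τ hτ (rowFin_S0 D τ hτ P) (rowFin_T0 D τ hτ P) _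
    (good_Pset_Qset D τ hτ P)]
  rw [tabloidOf_Pset_Qset D τ hτ P, smul_smul, sgnq_mul_self, one_smul]

lemma G0_single (P : RowTabloid (d * n) (delta n d D.1)) :
    G0 D τ hτ (Finsupp.single P 1) = Gfun D τ hτ P := lift_single _ _

lemma GF_id_on_Cmod (w : Wspace n d) (hw : w ∈ Cmod n d D) :
    G0 D τ hτ (F0 D τ hτ w) = w := by
  induction hw using Submodule.span_induction with
  | mem x hx =>
      obtain ⟨⟨S, T⟩, hshape, rfl⟩ := hx
      rw [F0_mk_single D τ hτ S T hshape, map_smul, G0_single, Gfun]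
      have hP : Pset D τ (tabloidOf D τ hτ (rowFin S) (rowFin T) (good_of_shape D hshape))
          = rowFin S := Pset_tabloidOf D τ hτ _ _ _
      have hQ : Qset D τ (tabloidOf D τ hτ (rowFin S) (rowFin T) (good_of_shape D hshape))
          = rowFin T := Qset_tabloidOf D τ hτ _ _ _
      have hS0 : S0 D τ hτ (tabloidOf D τ hτ (rowFin S) (rowFin T) (good_of_shape D hshape))
          = canonRow S := canonP_congr hP _ _ _ _
      have hT0 : T0 D τ hτ (tabloidOf D τ hτ (rowFin S) (rowFin T) (good_of_shape D hshape))
          = canonRow T := canonP_congr hQ _ _ _ _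
      rw [hS0, hT0, smul_smul]
      exact (reduce_pair S T).symm
  | zero => simp
  | add x y _ _ hx hy => rw [map_add, map_add, hx, hy]
  | smul a x _ hx => rw [map_smul, map_smul, hx]

lemma subtype_G1 : (Cmod n d D).subtype.comp (G1 D τ hτ) = G0 D τ hτ := by
  apply Finsupp.lhom_ext
  intro P b
  have hb : (Finsupp.single P b : RowTabloidModule (d * n) (delta n d D.1))
      = b • Finsupp.single P 1 := by rw [Finsupp.smul_single, smul_eq_mul, mul_one]
  rw [hb, map_smul, map_smul]
  congr 1
  rw [G0_single]
  have hG1 : G1 D τ hτ (Finsupp.single P 1)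
      = (⟨Gfun D τ hτ P, Gfun_mem D τ hτ P⟩ : Cmod n d D) := lift_single _ _
  show (Cmod n d D).subtype (G1 D τ hτ (Finsupp.single P 1)) = Gfun D τ hτ P
  rw [hG1]
  rfl

def Fres : Cmod n d D →ₗ[ℚ] RowTabloidModule (d * n) (delta n d D.1) :=
  (F0 D τ hτ).comp (Cmod n d D).subtype

lemma Fres_apply (w : Wspace n d) (hw : w ∈ Cmod n d D) :
    Fres D τ hτ (⟨w, hw⟩ : Cmod n d D) = F0 D τ hτ w := rfl

lemma FresG1 : (Fres D τ hτ).comp (G1 D τ hτ) = LinearMap.id := by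
  apply Finsupp.lhom_ext
  intro P b
  have hb : (Finsupp.single P b : RowTabloidModule (d * n) (delta n d D.1))
      = b • Finsupp.single P 1 := by rw [Finsupp.smul_single, smul_eq_mul, mul_one]
  rw [hb, map_smul, map_smul]
  congr 1
  have hG1 : G1 D τ hτ (Finsupp.single P 1) = ⟨Gfun D τ hτ P, Gfun_mem D τ hτ P⟩ :=
    lift_single _ _
  show Fres D τ hτ (G1 D τ hτ (Finsupp.single P 1)) = Finsupp.single P 1
  rw [hG1]
  show F0 D τ hτ (Gfun D τ hτ P) = Finsupp.single P 1
  exact F0_Gfun D τ hτ P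

lemma G1Fres : (G1 D τ hτ).comp (Fres D τ hτ) = LinearMap.id := by
  apply LinearMap.ext
  intro x
  apply Subtype.ext
  have hcoe : ((G1 D τ hτ (F0 D τ hτ (x : Wspace n d))) : Wspace n d)
      = G0 D τ hτ (F0 D τ hτ (x : Wspace n d)) := by
    have := congrArg (fun (f : RowTabloidModule (d * n) (delta n d D.1) →ₗ[ℚ] Wspace n d) =>
      f (F0 D τ hτ (x : Wspace n d))) (subtype_G1 D τ hτ)
    exact this
  show ((G1 D τ hτ (F0 D τ hτ (x : Wspace n d))) : Wspace n d) = (x : Wspace n d)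
  rw [hcoe]
  exact GF_id_on_Cmod D τ hτ (x : Wspace n d) x.2

end Maps

section Equivariance

variable (D : CorrDiagram n d) (τ : (Fin d × Fin d) ≃ Fin (delta n d D.1).length)
  (hτ : ∀ x, (delta n d D.1).get (τ x) = D.1 x)

lemma good_map {A B : Fin d → Finset (Fin (d * n))} (σ : Equiv.Perm (Fin (d * n)))
    (h : GoodPair D A B) :
    GoodPair D (fun i => (A i).map σ.toEmbedding) (fun j => (B j).map σ.toEmbedding) := by
  obtain ⟨hA, hB, hcA, hcB, hcard⟩ := h
  refine ⟨fun i i' hi => (Finset.disjoint_map _).mpr (hA i i' hi),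
    fun j j' hj => (Finset.disjoint_map _).mpr (hB j j' hj), ?_, ?_, ?_⟩
  · intro k
    obtain ⟨i, hi⟩ := hcA (σ.symm k)
    exact ⟨i, Finset.mem_map.mpr ⟨σ.symm k, hi, by simp⟩⟩
  · intro k
    obtain ⟨j, hj⟩ := hcB (σ.symm k)
    exact ⟨j, Finset.mem_map.mpr ⟨σ.symm k, hj, by simp⟩⟩
  · intro i j
    rw [← Finset.map_inter, Finset.card_map, hcard]

lemma tabloid_map {A B : Fin d → Finset (Fin (d * n))} (σ : Equiv.Perm (Fin (d * n)))
    (h : GoodPair D A B) :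
    tabloidOf D τ hτ (fun i => (A i).map σ.toEmbedding) (fun j => (B j).map σ.toEmbedding)
        (good_map D σ h)
      = permTabloid (d * n) (delta n d D.1) σ (tabloidOf D τ hτ A B h) := by
  apply RowTabloid.ext'
  funext t
  show (A (τ.symm t).1).map σ.toEmbedding ∩ (B (τ.symm t).2).map σ.toEmbedding
    = (A (τ.symm t).1 ∩ B (τ.symm t).2).map σ.toEmbedding
  rw [Finset.map_inter]

lemma chi_invariant (S T : Filling n d) (σ : Equiv.Perm (Fin (d * n))) :
    (S.trans σ).trans (T.trans σ).symm = S.trans T.symm := by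
  apply Equiv.ext
  intro x
  simp

end Equivariance

end AuxiliaryLemmas

/-- `𝒞(D)` is isomorphic to the row tabloid module `ℛ(δ(D))` as a `ℚ[S_{dn}]`-module:
there is a `ℚ`-linear equivalence intertwining the (diagonal) `S_{dn}`-actions. -/
theorem stmt7 (n d : ℕ) (hn : 0 < n) (hd : 0 < d) (D : CorrDiagram n d) :
    ∃ e : Cmod n d D ≃ₗ[ℚ] RowTabloidModule (d * n) (delta n d D.1),
      ∀ (σ : Equiv.Perm (Fin (d * n))) (S T : Filling n d)
        (h : shapeOf n d (S, T) = D.1)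
        (h' : shapeOf n d (S.trans σ, T.trans σ) = D.1),
        e ⟨(Submodule.Quotient.mk
              (Finsupp.single ((S.trans σ, T.trans σ) : Filling n d × Filling n d) (1 : ℚ))
              : Wspace n d),
            Submodule.subset_span ⟨(S.trans σ, T.trans σ), h', rfl⟩⟩ =
        Finsupp.mapDomain (permTabloid (d * n) (delta n d D.1) σ)
          (e ⟨(Submodule.Quotient.mk
                (Finsupp.single ((S, T) : Filling n d × Filling n d) (1 : ℚ))
                : Wspace n d),
              Submodule.subset_span ⟨(S, T), h, rfl⟩⟩) := by
  obtain ⟨τ, hτ⟩ := exists_tau D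
  refine ⟨LinearEquiv.ofLinear (Fres D τ hτ) (G1 D τ hτ) (FresG1 D τ hτ) (G1Fres D τ hτ), ?_⟩
  intro σ S T h h'
  rw [LinearEquiv.ofLinear_apply, LinearEquiv.ofLinear_apply]
  show F0 D τ hτ (Submodule.Quotient.mk
      (Finsupp.single ((S.trans σ, T.trans σ) : Filling n d × Filling n d) (1 : ℚ)) : Wspace n d) =
    Finsupp.mapDomain (permTabloid (d * n) (delta n d D.1) σ) (F0 D τ hτ (Submodule.Quotient.mk
      (Finsupp.single ((S, T) : Filling n d × Filling n d) (1 : ℚ)) : Wspace n d))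
  rw [F0_mk_single D τ hτ _ _ h', F0_mk_single D τ hτ _ _ h]
  rw [Finsupp.mapDomain_smul, Finsupp.mapDomain_single]
  rw [chi_invariant]
  congr 1
  rw [tabloidOf_congr D τ hτ (funext (rowFin_trans S σ)) (funext (rowFin_trans T σ)) _
    (good_map D σ (good_of_shape D h))]
  rw [tabloid_map]
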